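/- Let A → B be a local homomorphism of local rings making B a flat A-algebra, and let M be an arbitrary A-module. Then M is a free A-module of finite rank if and only if M ⊗_A B is a free B-module of finite rank. -/

import Mathlib

open TensorProduct

section Aux

open IsLocalRing Module

/-- A flat local homomorphism of local rings is faithfully flat. -/
theorem FFD.faithfullyFlat {A B : Type*} [CommRing A] [CommRing B] [IsLocalRing A] [IsLocalRing B]
    [Algebra A B] [IsLocalHom (algebraMap A B)] [Module.Flat A B] :
    Module.FaithfullyFlat A B where
  submodule_ne_top := by
    intro m hm htop
    rw [IsLocalRing.eq_maximalIdeal hm] at htop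
    have hle : IsLocalRing.maximalIdeal A • (⊤ : Submodule A B) ≤
        (IsLocalRing.maximalIdeal B).restrictScalars A := by
      refine Submodule.smul_le.mpr fun a ha b _ => ?_
      simp only [Submodule.restrictScalars_mem, Algebra.smul_def]
      exact Ideal.mul_mem_right _ _ <| by
        simpa [IsLocalRing.mem_maximalIdeal, mem_nonunits_iff] using
          fun h => ha ((isUnit_of_map_unit (algebraMap A B) a h))
    have h1 : (1 : B) ∈ (IsLocalRing.maximalIdeal B).restrictScalars A :=
      hle (by rw [htop]; trivial)
    exact (IsLocalRing.maximalIdeal.isMaximal B).ne_top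
      (Ideal.eq_top_of_isUnit_mem _ h1 isUnit_one)

/-- Descent of module-finiteness along a faithfully flat base change. -/
theorem FFD.finite_descent {A B : Type*} [CommRing A] [CommRing B]
    [Algebra A B] [Module.FaithfullyFlat A B]
    (M : Type*) [AddCommGroup M] [Module A M] [Module.Finite B (B ⊗[A] M)] :
    Module.Finite A M := by
  classical
  obtain ⟨s, hs⟩ := (Module.finite_def.mp ‹Module.Finite B (B ⊗[A] M)›)
  have h1 : ∀ t : B ⊗[A] M, ∃ S : Finset M,
      t ∈ Submodule.span B ((fun m => (1:B) ⊗ₜ[A] m) '' S) := by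
    intro t
    induction t with
    | zero => exact ⟨∅, Submodule.zero_mem _⟩
    | tmul b m =>
        refine ⟨{m}, ?_⟩
        rw [show b ⊗ₜ[A] m = b • ((1:B) ⊗ₜ[A] m) by
          rw [TensorProduct.smul_tmul', smul_eq_mul, mul_one]]
        exact Submodule.smul_mem _ _ (Submodule.subset_span ⟨m, by simp, rfl⟩)
    | add x y hx hy =>
        obtain ⟨Sx, hSx⟩ := hx
        obtain ⟨Sy, hSy⟩ := hy
        refine ⟨Sx ∪ Sy, Submodule.add_mem _
          (Submodule.span_mono (Set.image_mono ?_) hSx)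
          (Submodule.span_mono (Set.image_mono ?_) hSy)⟩ <;>
          · intro m hm; simp only [Finset.coe_union, Set.mem_union]
            first | exact Or.inl hm | exact Or.inr hm
  choose S hS using h1
  set T : Finset M := s.attach.biUnion (fun t => S t.1) with hT
  set N : Submodule A M := Submodule.span A (T : Set M) with hN
  have hker : (⊤ : Submodule B (B ⊗[A] M)) ≤ LinearMap.ker (N.mkQ.baseChange B) := by
    rw [← hs, Submodule.span_le]
    intro t ht
    have hsub : t ∈ Submodule.span B ((fun m => (1:B) ⊗ₜ[A] m) '' T) := by
      refine Submodule.span_mono (Set.image_mono ?_) (hS t)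
      intro m hm
      exact Finset.mem_coe.mpr <| Finset.mem_biUnion.mpr
        ⟨⟨t, ht⟩, Finset.mem_attach _ _, Finset.mem_coe.mp hm⟩
    refine Submodule.span_le.mpr ?_ hsub
    rintro _ ⟨m, hm, rfl⟩
    have hmN : m ∈ N := Submodule.subset_span hm
    simp only [SetLike.mem_coe, LinearMap.mem_ker, LinearMap.baseChange_tmul]
    rw [show N.mkQ m = 0 from (Submodule.Quotient.mk_eq_zero N).mpr hmN]
    simp
  have hz : N.mkQ.baseChange B = 0 := LinearMap.ker_eq_top.mp (top_le_iff.mp hker)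
  have hz' : LinearMap.lTensor B N.mkQ = 0 :=
    LinearMap.ext fun x => congrFun (congrArg DFunLike.coe hz) x
  have hmkQ : N.mkQ = 0 := (Module.FaithfullyFlat.zero_iff_lTensor_zero A B N.mkQ).mpr hz'
  have hNtop : N = ⊤ := by
    rw [← Submodule.ker_mkQ N, hmkQ]; exact LinearMap.ker_zero
  exact ⟨by rw [← hNtop]; exact Submodule.fg_span T.finite_toSet⟩

theorem FFD.towerABl {A B : Type*} [CommRing A] [CommRing B] [IsLocalRing A] [IsLocalRing B]
    [Algebra A B] [IsLocalHom (algebraMap A B)] :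
    IsScalarTower A B (ResidueField B) := by
  refine IsScalarTower.of_algebraMap_eq fun a => ?_
  show _ = algebraMap B (ResidueField B) (algebraMap A B a)
  rw [IsScalarTower.algebraMap_apply A (ResidueField A) (ResidueField B)]
  exact ResidueField.map_residue _ _

set_option maxHeartbeats 1000000 in
set_option synthInstance.maxHeartbeats 400000 in
/-- Descent of freeness: if `B ⊗[A] M` is finite free over `B`, with `A → B` a flat local
homomorphism of local rings and `M` already known to be finite over `A`, then `M` is free. -/
theorem FFD.free_descent {A B : Type*} [CommRing A] [CommRing B] [IsLocalRing A] [IsLocalRing B]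
    [Algebra A B] [IsLocalHom (algebraMap A B)] [Module.FaithfullyFlat A B]
    (M : Type*) [AddCommGroup M] [Module A M] [Module.Finite A M]
    [Module.Free B (B ⊗[A] M)] [Module.Finite B (B ⊗[A] M)] :
    Module.Free A M := by
  classical
  haveI : IsScalarTower A B (ResidueField B) := FFD.towerABl
  -- a basis of `k ⊗ M` over the residue field `k` of `A`,
  -- and an induced surjection `i : Aᴵ → M`
  let b : Basis (Free.ChooseBasisIndex (ResidueField A) (ResidueField A ⊗[A] M))
      (ResidueField A) (ResidueField A ⊗[A] M) :=
    Module.Free.chooseBasis (ResidueField A) (ResidueField A ⊗[A] M)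
  choose f hf using TensorProduct.mk_surjective A M (ResidueField A)
    Ideal.Quotient.mk_surjective
  let i : (Free.ChooseBasisIndex (ResidueField A) (ResidueField A ⊗[A] M) → A) →ₗ[A] M :=
    Fintype.linearCombination A (f ∘ b)
  have hi : Function.Surjective i := by
    rw [← LinearMap.range_eq_top, Fintype.range_linearCombination]
    exact IsLocalRing.span_eq_top_of_tmul_eq_basis (R := A) (f := f ∘ b) b (fun _ ↦ hf _)
  let g : B ⊗[A] (Free.ChooseBasisIndex (ResidueField A) (ResidueField A ⊗[A] M) → A)
      →ₗ[B] B ⊗[A] M := i.baseChange B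
  have hg : Function.Surjective g := i.lTensor_surjective B hi
  -- dimension count over the residue field `l` of `B`
  have e1 : ResidueField B ⊗[B]
        (B ⊗[A] (Free.ChooseBasisIndex (ResidueField A) (ResidueField A ⊗[A] M) → A))
      ≃ₗ[ResidueField B] ResidueField B ⊗[A]
        (Free.ChooseBasisIndex (ResidueField A) (ResidueField A ⊗[A] M) → A) :=
    AlgebraTensorModule.cancelBaseChange A B (ResidueField B) (ResidueField B) _
  have e2 : ResidueField B ⊗[B] (B ⊗[A] M) ≃ₗ[ResidueField B] ResidueField B ⊗[A] M :=
    AlgebraTensorModule.cancelBaseChange A B (ResidueField B) (ResidueField B) M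
  have e3 : ResidueField B ⊗[ResidueField A] (ResidueField A ⊗[A] M)
      ≃ₗ[ResidueField B] ResidueField B ⊗[A] M :=
    AlgebraTensorModule.cancelBaseChange A (ResidueField A) (ResidueField B) (ResidueField B) M
  have hdim : Module.finrank (ResidueField B) (ResidueField B ⊗[B]
        (B ⊗[A] (Free.ChooseBasisIndex (ResidueField A) (ResidueField A ⊗[A] M) → A)))
      = Module.finrank (ResidueField B) (ResidueField B ⊗[B] (B ⊗[A] M)) := by
    rw [e1.finrank_eq, e2.finrank_eq, ← e3.finrank_eq,
      Module.finrank_baseChange, Module.finrank_baseChange,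
      Module.finrank_pi, Module.finrank_eq_card_basis b]
  have hgbar : Function.Injective (g.baseChange (ResidueField B)) :=
    (LinearMap.injective_iff_surjective_of_finrank_eq_finrank hdim).mpr
      (g.lTensor_surjective (ResidueField B) hg)
  -- the kernel of `g` is contained in `n • ⊤`, where `n` is the maximal ideal of `B`
  have hker_le : LinearMap.ker g ≤ maximalIdeal B • ⊤ := by
    intro x hx
    have h0 : g.baseChange (ResidueField B) ((1 : ResidueField B) ⊗ₜ[B] x) = 0 := by
      rw [LinearMap.baseChange_tmul, LinearMap.mem_ker.mp hx, tmul_zero]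
    have h1 : (1 : ResidueField B) ⊗ₜ[B] x = 0 := by
      apply hgbar; rw [h0, map_zero]
    have h2 : (Ideal.Quotient.mk (maximalIdeal B) 1) ⊗ₜ[B] x
        = (0 : (B ⧸ maximalIdeal B) ⊗[B]
          (B ⊗[A] (Free.ChooseBasisIndex (ResidueField A) (ResidueField A ⊗[A] M) → A))) := h1
    have h3 := congrArg (quotTensorEquivQuotSMul
      (B ⊗[A] (Free.ChooseBasisIndex (ResidueField A) (ResidueField A ⊗[A] M) → A))
      (maximalIdeal B)) h2
    rw [quotTensorEquivQuotSMul_mk_tmul, map_zero, one_smul] at h3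
    exact (Submodule.Quotient.mk_eq_zero _).mp h3
  -- `g` splits since `B ⊗ M` is projective, so its kernel is a finitely generated
  -- direct summand; by Nakayama the kernel vanishes
  obtain ⟨s, hsec⟩ := Module.projective_lifting_property g LinearMap.id hg
  set π := LinearMap.id - s ∘ₗ g with hπ
  have hπker : ∀ x ∈ LinearMap.ker g, π x = x := by
    intro x hx
    rw [hπ, LinearMap.sub_apply, LinearMap.id_apply, LinearMap.comp_apply,
      LinearMap.mem_ker.mp hx, map_zero, sub_zero]
  have hπmem : ∀ x, π x ∈ LinearMap.ker g := by
    intro x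
    have hx : g (s (g x)) = g x := by rw [← LinearMap.comp_apply, hsec]; rfl
    rw [LinearMap.mem_ker, hπ, LinearMap.sub_apply, LinearMap.id_apply, LinearMap.comp_apply,
      map_sub, hx, sub_self]
  have hrange : LinearMap.ker g = Submodule.map π ⊤ := by
    apply le_antisymm
    · intro x hx; exact ⟨x, trivial, hπker x hx⟩
    · rintro _ ⟨x, -, rfl⟩; exact hπmem x
  have hfg : (LinearMap.ker g).FG := by
    rw [hrange]; exact (Module.Finite.fg_top (R := B)).map π
  have hle : LinearMap.ker g ≤ maximalIdeal B • LinearMap.ker g := by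
    intro x hx
    have h4 : π x ∈ Submodule.map π (maximalIdeal B • ⊤) :=
      Submodule.mem_map_of_mem (hker_le hx)
    rw [Submodule.map_smul'', ← hrange] at h4
    rw [← hπker x hx]
    exact h4
  have hkbot : LinearMap.ker g = ⊥ :=
    Submodule.eq_bot_of_le_smul_of_le_jacobson_bot (maximalIdeal B) (LinearMap.ker g) hfg hle
      (by rw [IsLocalRing.jacobson_eq_maximalIdeal ⊥ bot_ne_top])
  have hginj : Function.Injective g := LinearMap.ker_eq_bot.mp hkbot
  -- use faithful flatness to descend injectivity of `i`
  have hinj' : Function.Injective (LinearMap.lTensor B i) := by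
    rw [← LinearMap.baseChange_eq_ltensor]; exact hginj
  have hexact := lTensor_exact B (LinearMap.exact_subtype_ker_map i) hi
  have hr0 : LinearMap.lTensor B (LinearMap.ker i).subtype = 0 := by
    apply LinearMap.range_eq_bot.mp
    rw [← hexact.linearMap_ker_eq]
    exact LinearMap.ker_eq_bot.mpr hinj'
  have hsub0 : (LinearMap.ker i).subtype = 0 :=
    (Module.FaithfullyFlat.zero_iff_lTensor_zero A B _).mpr hr0
  have hiinj : Function.Injective i := by
    rw [← LinearMap.ker_eq_bot, Submodule.eq_bot_iff]
    intro x hx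
    exact congrArg (fun h => h ⟨x, hx⟩) hsub0
  exact Module.Free.of_equiv (LinearEquiv.ofBijective i ⟨hiinj, hi⟩)

end Aux

/-- Lemma `fflatfreedescent`: for a flat local homomorphism of local rings `A → B`
and an arbitrary `A`-module `M`, `M` is finite free over `A` iff `B ⊗_A M` is finite
free over `B`. -/
theorem stmt_2 {A B : Type*} [CommRing A] [CommRing B] [IsLocalRing A] [IsLocalRing B]
    [Algebra A B] [IsLocalHom (algebraMap A B)] [Module.Flat A B]
    (M : Type*) [AddCommGroup M] [Module A M] :
    (Module.Free A M ∧ Module.Finite A M) ↔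
      (Module.Free B (B ⊗[A] M) ∧ Module.Finite B (B ⊗[A] M)) := by
  constructor
  · rintro ⟨hfree, hfin⟩
    exact ⟨inferInstance, Module.Finite.base_change A B M⟩
  · rintro ⟨hfree, hfin⟩
    haveI := hfree; haveI := hfin
    haveI : Module.FaithfullyFlat A B := FFD.faithfullyFlat
    haveI : Module.Finite A M := FFD.finite_descent (A := A) (B := B) M
    exact ⟨FFD.free_descent (A := A) (B := B) M, inferInstance⟩
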